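/- Let x > y > 8 be real numbers, let a ∈ (0, 1/3), and set b = 3a/2. Assume b ∈ (0, 1/2) and 2 ≥ (2 − y^(−b)) · (1 + √(2/y))^(2·log x / log(y/2)). Then every primitive nondeficient number n ≤ x with P(n) > y and square-full part s(n) < y^a has a squarefree divisor d with y^(b/3) ≤ d ≤ y^(1/2)/√2. -/

import Mathlib

open ArithmeticFunction

/-- A positive integer `n` is nondeficient if `σ n ≥ 2n`; it is a primitive
nondeficient number (pnd) if moreover every proper divisor is deficient. -/
def Pnd (n : ℕ) : Prop :=
  0 < n ∧ 2 * n ≤ ArithmeticFunction.sigma 1 n ∧ ∀ d : ℕ, d ∣ n → d < n → ArithmeticFunction.sigma 1 d < 2 * d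

/-- The largest prime factor of `n`, with the convention `P 1 = 1`. -/
def P (n : ℕ) : ℕ := max 1 (n.primeFactors.sup _root_.id)

/-- The square-full part `s(n)` of `n`: the product of the prime powers
`p ^ (v_p(n))` over primes `p` with `v_p(n) ≥ 2`. -/
def sqfullPart (n : ℕ) : ℕ :=
  ∏ p ∈ n.primeFactors.filter (fun p => 2 ≤ n.factorization p), p ^ n.factorization p

open scoped ArithmeticFunction.sigma

lemma squarefree_prod_primes (T : Finset ℕ) (h : ∀ p ∈ T, p.Prime) :
    Squarefree (∏ p ∈ T, p) := by
  classical
  induction T using Finset.induction_on with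
  | empty => simpa using squarefree_one
  | @insert p s hx ih =>
    rw [Finset.prod_insert hx]
    have hp := h p (Finset.mem_insert_self _ _)
    have hs : ∀ q ∈ s, Nat.Prime q := fun q hq => h q (Finset.mem_insert_of_mem hq)
    have hcop : Nat.Coprime p (∏ q ∈ s, q) := by
      rw [Nat.coprime_prod_right_iff]
      intro q hq
      exact (Nat.coprime_primes hp (hs q hq)).2 (by rintro rfl; exact hx hq)
    exact (Nat.squarefree_mul hcop).2 ⟨hp.prime.squarefree, ih hs⟩

set_option maxHeartbeats 1000000 in
/-- Let `x > y > 8`, `a ∈ (0, 1/3)`, `b = 3a/2` with `b ∈ (0, 1/2)` and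
`2 ≥ (2 − y^(−b))(1 + √(2/y))^(2 log x / log(y/2))`.  Then every pnd `n ≤ x`
with `P n > y` and square-full part `< y^a` has a squarefree divisor `d` with
`y^(b/3) ≤ d ≤ y^(1/2)/√2`. -/
theorem pnd_has_medium_squarefree_divisor (x y a b : ℝ)
    (hy : 8 < y) (hxy : y < x)
    (ha : 0 < a) (ha' : a < 1 / 3) (hb : b = 3 * a / 2)
    (hb0 : 0 < b) (hb2 : b < 1 / 2)
    (hcond : (2 - y ^ (-b)) *
        (1 + Real.sqrt (2 / y)) ^ (2 * Real.log x / Real.log (y / 2)) ≤ 2)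
    (n : ℕ) (hn : Pnd n) (hnx : (n : ℝ) ≤ x)
    (hP : y < (P n : ℝ)) (hsf : (sqfullPart n : ℝ) < y ^ a) :
    ∃ d : ℕ, d ∣ n ∧ Squarefree d ∧
      y ^ (b / 3) ≤ (d : ℝ) ∧ (d : ℝ) ≤ y ^ ((1 : ℝ) / 2) / Real.sqrt 2 := by
  classical
  obtain ⟨hn0, hσ2, hdef⟩ := hn
  have hn0' : n ≠ 0 := hn0.ne'
  have hy0 : (0 : ℝ) < y := by linarith
  have hy1 : (1 : ℝ) < y := by linarith
  set S := n.primeFactors with hS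
  set e := n.factorization with he
  set U : ℝ := y ^ ((1 : ℝ) / 2) / Real.sqrt 2 with hU
  have hUW : U = Real.sqrt (y / 2) := by
    rw [hU, Real.sqrt_div hy0.le 2, Real.sqrt_eq_rpow, Real.sqrt_eq_rpow]
  have hU2 : (2 : ℝ) < U := by
    rw [hUW]
    exact (Real.lt_sqrt (by norm_num)).2 (by nlinarith)
  have hU0 : (0 : ℝ) < U := by linarith
  have hrb3 : (1 : ℝ) < y ^ (b / 3) :=
    (Real.one_lt_rpow_iff hy0.le).2 (Or.inl ⟨hy1, by linarith⟩)
  have hrb3' : (0 : ℝ) < y ^ (b / 3) := by linarith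
  -- key size comparison :  y^(b/3) * y^(b/3) ≤ U
  have h2b3 : y ^ (b / 3) * y ^ (b / 3) ≤ U := by
    have h1 : y ^ (b / 3) * y ^ (b / 3) = y ^ (b / 3 + b / 3) := (Real.rpow_add hy0 _ _).symm
    have h2 : y ^ (b / 3 + b / 3) ≤ y ^ ((1 : ℝ) / 3) :=
      Real.rpow_le_rpow_of_exponent_le hy1.le (by linarith)
    have h3 : y ^ ((1 : ℝ) / 3) ≤ U := by
      rw [hUW]
      have hB0 : (0 : ℝ) ≤ Real.sqrt (y / 2) := Real.sqrt_nonneg _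
      refine le_of_pow_le_pow_left₀ (n := 6) (by norm_num) hB0 ?_
      have hA6 : (y ^ ((1 : ℝ) / 3)) ^ (6 : ℕ) = y ^ (2 : ℕ) := by
        rw [← Real.rpow_natCast (y ^ ((1 : ℝ) / 3)) 6, ← Real.rpow_mul hy0.le,
          show ((1 : ℝ) / 3 * ((6 : ℕ) : ℝ)) = ((2 : ℕ) : ℝ) by norm_num,
          Real.rpow_natCast]
      have hB6 : (Real.sqrt (y / 2)) ^ (6 : ℕ) = (y / 2) ^ (3 : ℕ) := by
        rw [show (6 : ℕ) = 2 * 3 by norm_num, pow_mul, Real.sq_sqrt (by linarith : (0:ℝ) ≤ y / 2)]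
      rw [hA6, hB6]
      nlinarith
    linarith
  have hb3U : y ^ (b / 3) ≤ U := by nlinarith
  -- Case A : a medium prime divides n exactly once
  by_cases hA : ∃ p ∈ S, e p = 1 ∧ y ^ (b / 3) ≤ (p : ℝ) ∧ (p : ℝ) ≤ U
  · obtain ⟨p, hpS, -, h1, h2⟩ := hA
    exact ⟨p, Nat.dvd_of_mem_primeFactors hpS,
      (Nat.prime_of_mem_primeFactors hpS).prime.squarefree, h1, h2⟩
  push_neg at hA
  set Q : Finset ℕ := S.filter (fun p => ¬ 2 ≤ e p) with hQ
  set Sm : Finset ℕ := Q.filter (fun p => (p : ℝ) < y ^ (b / 3)) with hSm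
  set Bg : Finset ℕ := Q.filter (fun p => ¬ (p : ℝ) < y ^ (b / 3)) with hBg
  have hQS : Q ⊆ S := Finset.filter_subset _ _
  have hSmS : Sm ⊆ S := (Finset.filter_subset _ _).trans hQS
  have hBgS : Bg ⊆ S := (Finset.filter_subset _ _).trans hQS
  have hprimeS : ∀ p ∈ S, Nat.Prime p := fun p hp => Nat.prime_of_mem_primeFactors hp
  have heQ : ∀ p ∈ Q, e p = 1 := by
    intro p hp
    rw [hQ, Finset.mem_filter] at hp
    obtain ⟨hp1, hp2⟩ := hp
    have h0 : 0 < e p := by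
      rw [he]
      exact (hprimeS p hp1).factorization_pos_of_dvd hn0' (Nat.dvd_of_mem_primeFactors hp1)
    omega
  -- Case B : the small primes multiply up beyond y^(b/3)
  by_cases hBc : y ^ (b / 3) ≤ ∏ p ∈ Sm, (p : ℝ)
  · set 𝒮 : Finset (Finset ℕ) :=
      Sm.powerset.filter (fun T => y ^ (b / 3) ≤ ∏ p ∈ T, (p : ℝ)) with h𝒮
    have hne : 𝒮.Nonempty := ⟨Sm, by simp [h𝒮, hBc]⟩
    obtain ⟨T, hT𝒮, hTmin⟩ := Finset.exists_min_image 𝒮 Finset.card hne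
    rw [h𝒮, Finset.mem_filter, Finset.mem_powerset] at hT𝒮
    obtain ⟨hTsub, hTge⟩ := hT𝒮
    have hTS : T ⊆ S := hTsub.trans hSmS
    have hTprime : ∀ p ∈ T, Nat.Prime p := fun p hp => hprimeS p (hTS hp)
    have hTne : T.Nonempty := by
      rcases T.eq_empty_or_nonempty with h | h
      · rw [h] at hTge; simp at hTge; linarith
      · exact h
    obtain ⟨p, hpT⟩ := hTne
    have hperase : (∏ q ∈ T.erase p, (q : ℝ)) < y ^ (b / 3) := by
      by_contra hc
      push_neg at hc
      have hmem : T.erase p ∈ 𝒮 := by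
        rw [h𝒮]
        exact Finset.mem_filter.2 ⟨Finset.mem_powerset.2 ((T.erase_subset p).trans hTsub), hc⟩
      have h1 := hTmin _ hmem
      have h2 := Finset.card_erase_lt_of_mem hpT
      omega
    have hplt : (p : ℝ) < y ^ (b / 3) := by
      have := hTsub hpT
      rw [hSm, Finset.mem_filter] at this
      exact this.2
    refine ⟨∏ q ∈ T, q, ?_, squarefree_prod_primes T hTprime, ?_, ?_⟩
    · exact dvd_trans (Finset.prod_dvd_prod_of_subset T S (fun q => q) hTS)
        (Nat.prod_primeFactors_dvd n)
    · rw [Nat.cast_prod]; exact hTge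
    · rw [Nat.cast_prod]
      refine le_of_lt ?_
      have hmul : (∏ q ∈ T, (q : ℝ)) = (p : ℝ) * ∏ q ∈ T.erase p, (q : ℝ) :=
        (Finset.mul_prod_erase T _ hpT).symm
      have hnn : (0 : ℝ) ≤ ∏ q ∈ T.erase p, (q : ℝ) :=
        Finset.prod_nonneg (fun q _ => by positivity)
      calc (∏ q ∈ T, (q : ℝ)) = (p : ℝ) * ∏ q ∈ T.erase p, (q : ℝ) := hmul
        _ < y ^ (b / 3) * y ^ (b / 3) :=
            mul_lt_mul'' hplt hperase (by positivity) hnn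
        _ ≤ U := h2b3
  -- Case C : derive a contradiction
  exfalso
  push_neg at hBc
  -- n ≥ 2
  have hn1 : n ≠ 1 := by
    rintro rfl
    rw [sigma_one_apply] at hσ2
    simp at hσ2
  have hSne : S.Nonempty := Nat.nonempty_primeFactors.2 (by omega)
  obtain ⟨p0, hp0S, hp0eq⟩ := Finset.exists_mem_eq_sup S hSne _root_.id
  have hp0prime : Nat.Prime p0 := hprimeS p0 hp0S
  have hPp0 : P n = p0 := by
    rw [P, ← hS, hp0eq]
    exact max_eq_right hp0prime.one_lt.le
  rw [hPp0] at hP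
  -- the square-full part
  have hspos : 0 < sqfullPart n := by
    rw [sqfullPart]
    exact Finset.prod_pos fun q hq =>
      pow_pos (Nat.prime_of_mem_primeFactors (Finset.mem_of_mem_filter _ hq)).pos _
  have hyay : y ^ a < y := by
    nth_rewrite 2 [← Real.rpow_one y]
    exact Real.rpow_lt_rpow_of_exponent_lt hy1 (by linarith)
  have hyb3y : y ^ (b / 3) < y := by
    nth_rewrite 2 [← Real.rpow_one y]
    exact Real.rpow_lt_rpow_of_exponent_lt hy1 (by linarith)
  -- p0 has exponent 1 and is big
  have hep0 : ¬ 2 ≤ e p0 := by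
    intro h2
    have hdvd : p0 ∣ sqfullPart n := by
      have h3 : p0 ^ e p0 ∣ sqfullPart n := by
        refine Finset.dvd_prod_of_mem _ ?_
        rw [Finset.mem_filter]
        exact ⟨hp0S, h2⟩
      exact dvd_trans (dvd_pow_self p0 (by omega)) h3
    have hle : (p0 : ℝ) ≤ (sqfullPart n : ℝ) := Nat.cast_le.2 (Nat.le_of_dvd hspos hdvd)
    linarith
  have hp0Q : p0 ∈ Q := by rw [hQ, Finset.mem_filter]; exact ⟨hp0S, hep0⟩
  have hp0Bg : p0 ∈ Bg := by
    rw [hBg, Finset.mem_filter]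
    exact ⟨hp0Q, not_lt.2 (by linarith)⟩
  -- all big primes exceed U
  have hBigU : ∀ p ∈ Bg, U < (p : ℝ) := by
    intro p hp
    rw [hBg, Finset.mem_filter] at hp
    obtain ⟨hpQ, hns⟩ := hp
    exact hA p (hQS hpQ) (heQ p hpQ) (not_lt.1 hns)
  -- factorization of n
  have hfact : n = ∏ p ∈ S, p ^ e p := by
    conv_lhs => rw [← Nat.factorization_prod_pow_eq_self hn0']
    rw [Finsupp.prod]
    rw [show n.factorization.support = S from Nat.support_factorization n]
  set M : ℕ := sqfullPart n * ∏ p ∈ Sm, p with hM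
  set K : ℕ := ∏ p ∈ Bg, p with hK
  have hsq : sqfullPart n = ∏ p ∈ S.filter (fun p => 2 ≤ e p), p ^ e p := rfl
  have hsplit : (∏ p ∈ S.filter (fun p => 2 ≤ e p), p ^ e p) * ∏ p ∈ Q, p ^ e p
      = ∏ p ∈ S, p ^ e p := by
    rw [hQ]; exact Finset.prod_filter_mul_prod_filter_not S _ _
  have hQsplit : (∏ p ∈ Sm, p) * ∏ p ∈ Bg, p = ∏ p ∈ Q, p := by
    rw [hSm, hBg]; exact Finset.prod_filter_mul_prod_filter_not Q _ _
  have hQ1 : ∏ p ∈ Q, p ^ e p = ∏ p ∈ Q, p :=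
    Finset.prod_congr rfl (fun p hp => by rw [heQ p hp, pow_one])
  have hnMK : n = M * K := by
    rw [hM, hK, mul_assoc, hQsplit, ← hQ1, hsq, hsplit, ← hfact]
  have hK2 : 2 ≤ K := by
    have hd : p0 ∣ K := Finset.dvd_prod_of_mem _ hp0Bg
    have hKpos : 0 < K := Finset.prod_pos fun q hq => (hprimeS q (hBgS hq)).pos
    exact le_trans hp0prime.two_le (Nat.le_of_dvd hKpos hd)
  have hMpos : 0 < M := by
    rw [hM]
    exact Nat.mul_pos hspos (Finset.prod_pos fun q hq => (hprimeS q (hSmS hq)).pos)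
  have hMdvd : M ∣ n := ⟨K, hnMK⟩
  have hMlt : M < n := by
    rw [hnMK]
    exact (Nat.lt_mul_iff_one_lt_right hMpos).2 (by omega)
  have hMdef : σ 1 M < 2 * M := hdef M hMdvd hMlt
  -- coprimality
  have hcop : Nat.Coprime M K := by
    rw [hK, Nat.coprime_prod_right_iff]
    intro p hpB
    have hp : Nat.Prime p := hprimeS p (hBgS hpB)
    rw [Nat.coprime_comm]
    refine (hp.coprime_iff_not_dvd).2 ?_
    intro hdvd
    rw [hM] at hdvd
    rcases (Nat.Prime.dvd_mul hp).1 hdvd with h | h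
    · rw [hsq] at h
      rcases (hp.prime.dvd_finset_prod_iff _).1 h with ⟨r, hrmem, hpr⟩
      rw [Finset.mem_filter] at hrmem
      have hr : Nat.Prime r := hprimeS r hrmem.1
      have hpr' : p = r := (Nat.prime_dvd_prime_iff_eq hp hr).1 (hp.dvd_of_dvd_pow hpr)
      subst hpr'
      have hpQ2 : p ∈ Q := by rw [hBg, Finset.mem_filter] at hpB; exact hpB.1
      rw [hQ, Finset.mem_filter] at hpQ2
      exact hpQ2.2 hrmem.2
    · rcases (hp.prime.dvd_finset_prod_iff _).1 h with ⟨r, hrmem, hpr⟩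
      have hr : Nat.Prime r := hprimeS r (hSmS hrmem)
      have hpr' : p = r := (Nat.prime_dvd_prime_iff_eq hp hr).1 hpr
      subst hpr'
      rw [hSm, Finset.mem_filter] at hrmem
      rw [hBg, Finset.mem_filter] at hpB
      exact hpB.2 hrmem.2
  -- sigma computation
  have hσK : σ 1 K = ∏ p ∈ Bg, (p + 1) := by
    rw [hK, isMultiplicative_sigma.map_prod (fun p => p) Bg ?_]
    · refine Finset.prod_congr rfl (fun p hp => ?_)
      have hp' : Nat.Prime p := hprimeS p (hBgS hp)
      rw [sigma_one_apply, hp'.divisors, Finset.sum_pair hp'.one_lt.ne]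
      omega
    · intro p hp q hq hne
      exact (Nat.coprime_primes (hprimeS p (hBgS hp)) (hprimeS q (hBgS hq))).2 hne
  have hσn : σ 1 n = σ 1 M * ∏ p ∈ Bg, (p + 1) := by
    rw [hnMK, isMultiplicative_sigma.map_mul_of_coprime hcop, hσK]
  -- now the real-number estimates
  set t : ℝ := Real.sqrt (2 / y) with ht
  have htU : U⁻¹ = t := by
    rw [hUW, ht, ← Real.sqrt_inv, show ((y / 2)⁻¹ : ℝ) = 2 / y by rw [inv_div]]
  have ht0 : 0 ≤ t := Real.sqrt_nonneg _
  set E : ℝ := 2 * Real.log x / Real.log (y / 2) with hE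
  have hlogy2 : 0 < Real.log (y / 2) := Real.log_pos (by linarith)
  have hx0 : (0 : ℝ) < x := by linarith
  -- card bound
  have hKx : (K : ℝ) ≤ x := by
    have h1 : K ≤ n := Nat.le_of_dvd hn0 ⟨M, by rw [hnMK]; ring⟩
    have : (K : ℝ) ≤ (n : ℝ) := Nat.cast_le.2 h1
    linarith
  have hKprod : (K : ℝ) = ∏ p ∈ Bg, (p : ℝ) := by rw [hK]; exact Nat.cast_prod _ _
  have hUk : U ^ Bg.card ≤ (K : ℝ) := by
    rw [hKprod, ← Finset.prod_const]
    exact Finset.prod_le_prod (fun p _ => hU0.le) (fun p hp => (hBigU p hp).le)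
  have hcard : (Bg.card : ℝ) ≤ E := by
    have h1 : Real.log (U ^ Bg.card) ≤ Real.log x :=
      Real.log_le_log (pow_pos hU0 _) (le_trans hUk hKx)
    rw [Real.log_pow, hUW, Real.log_sqrt (by linarith : (0:ℝ) ≤ y / 2)] at h1
    rw [hE, le_div_iff₀ hlogy2]
    linarith
  have hbase : (1 : ℝ) ≤ 1 + t := by linarith
  have hC0 : (0 : ℝ) < (1 + t) ^ E := Real.rpow_pos_of_pos (by linarith) _
  have hPi : ∏ p ∈ Bg, (1 + 1 / (p : ℝ)) ≤ (1 + t) ^ E := by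
    calc ∏ p ∈ Bg, (1 + 1 / (p : ℝ)) ≤ ∏ p ∈ Bg, (1 + t) := by
          refine Finset.prod_le_prod (fun p hp => by positivity) (fun p hp => ?_)
          have hpU := hBigU p hp
          have hp0 : (0 : ℝ) < p := lt_trans hU0 hpU
          have h1p : 1 / (p : ℝ) ≤ 1 / U := one_div_le_one_div_of_le hU0 hpU.le
          rw [one_div U, htU] at h1p
          linarith
      _ = (1 + t) ^ (Bg.card : ℕ) := Finset.prod_const _
      _ = (1 + t) ^ ((Bg.card : ℕ) : ℝ) := (Real.rpow_natCast _ _).symm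
      _ ≤ (1 + t) ^ E := Real.rpow_le_rpow_of_exponent_le hbase hcard
  -- M < y^b
  have hMyb : (M : ℝ) < y ^ b := by
    have hMcast : (M : ℝ) = (sqfullPart n : ℝ) * ∏ p ∈ Sm, (p : ℝ) := by
      rw [hM]; push_cast [Nat.cast_prod]; ring
    have hsnn : (0 : ℝ) ≤ (sqfullPart n : ℝ) := by positivity
    have hpn : (0 : ℝ) ≤ ∏ p ∈ Sm, (p : ℝ) := Finset.prod_nonneg fun p _ => by positivity
    have h1 : (M : ℝ) < y ^ a * y ^ (b / 3) := by
      rw [hMcast]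
      exact mul_lt_mul'' hsf hBc hsnn hpn
    have h2 : y ^ a * y ^ (b / 3) = y ^ b := by
      rw [← Real.rpow_add hy0]
      congr 1
      rw [hb]; ring
    linarith
  have htM : y ^ (-b) * (M : ℝ) < 1 := by
    have hyb0 : (0 : ℝ) < y ^ b := Real.rpow_pos_of_pos hy0 _
    rw [Real.rpow_neg hy0.le]
    calc (y ^ b)⁻¹ * (M : ℝ) < (y ^ b)⁻¹ * y ^ b :=
        mul_lt_mul_of_pos_left hMyb (inv_pos.2 hyb0)
      _ = 1 := inv_mul_cancel₀ hyb0.ne'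
  -- main chain
  have hσM : (σ 1 M : ℝ) ≤ 2 * (M : ℝ) - 1 := by
    have : σ 1 M + 1 ≤ 2 * M := hMdef
    have := (Nat.cast_le (α := ℝ)).2 this
    push_cast at this
    linarith
  have hPp : (0 : ℝ) < ∏ p ∈ Bg, (p : ℝ) :=
    Finset.prod_pos fun p hp => lt_trans hU0 (hBigU p hp)
  have hchain : 2 * (M : ℝ) * ∏ p ∈ Bg, (p : ℝ) ≤
      (2 * (M : ℝ) - 1) * ((∏ p ∈ Bg, (p : ℝ)) * ∏ p ∈ Bg, (1 + 1 / (p : ℝ))) := by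
    have h1 : (2 * n : ℝ) ≤ (σ 1 n : ℝ) := by exact_mod_cast hσ2
    have h2 : (σ 1 n : ℝ) = (σ 1 M : ℝ) * ∏ p ∈ Bg, ((p : ℝ) + 1) := by
      rw [hσn]; push_cast [Nat.cast_prod]; ring
    have h3 : ∏ p ∈ Bg, ((p : ℝ) + 1) = (∏ p ∈ Bg, (p : ℝ)) * ∏ p ∈ Bg, (1 + 1 / (p : ℝ)) := by
      rw [← Finset.prod_mul_distrib]
      refine Finset.prod_congr rfl (fun p hp => ?_)
      have hp0 : (0 : ℝ) < p := lt_trans hU0 (hBigU p hp)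
      field_simp
    have h4 : (0 : ℝ) ≤ ∏ p ∈ Bg, ((p : ℝ) + 1) :=
      Finset.prod_nonneg fun p _ => by positivity
    have h5 : (n : ℝ) = (M : ℝ) * (K : ℝ) := by exact_mod_cast congrArg (Nat.cast (R := ℝ)) hnMK
    calc 2 * (M : ℝ) * ∏ p ∈ Bg, (p : ℝ) = 2 * (n : ℝ) := by rw [h5, hKprod]; ring
      _ ≤ (σ 1 M : ℝ) * ∏ p ∈ Bg, ((p : ℝ) + 1) := by rw [← h2]; exact_mod_cast h1
      _ ≤ (2 * (M : ℝ) - 1) * ∏ p ∈ Bg, ((p : ℝ) + 1) :=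
          mul_le_mul_of_nonneg_right hσM h4
      _ = (2 * (M : ℝ) - 1) * ((∏ p ∈ Bg, (p : ℝ)) * ∏ p ∈ Bg, (1 + 1 / (p : ℝ))) := by
          rw [h3]
  have h6 : 2 * (M : ℝ) ≤ (2 * (M : ℝ) - 1) * ∏ p ∈ Bg, (1 + 1 / (p : ℝ)) := by
    have := hchain
    rw [show (2 * (M : ℝ) - 1) * ((∏ p ∈ Bg, (p : ℝ)) * ∏ p ∈ Bg, (1 + 1 / (p : ℝ)))
        = ((2 * (M : ℝ) - 1) * ∏ p ∈ Bg, (1 + 1 / (p : ℝ))) * ∏ p ∈ Bg, (p : ℝ) by ring,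
      show 2 * (M : ℝ) * ∏ p ∈ Bg, (p : ℝ) = (2 * (M:ℝ)) * ∏ p ∈ Bg, (p : ℝ) by ring] at this
    exact le_of_mul_le_mul_right this hPp
  have hM1 : (1 : ℝ) ≤ (M : ℝ) := by exact_mod_cast hMpos
  have h7 : 2 * (M : ℝ) ≤ (2 * (M : ℝ) - 1) * ((1 + t) ^ E) := by
    have h2M1 : (0 : ℝ) ≤ 2 * (M : ℝ) - 1 := by linarith
    calc 2 * (M : ℝ) ≤ (2 * (M : ℝ) - 1) * ∏ p ∈ Bg, (1 + 1 / (p : ℝ)) := h6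
      _ ≤ (2 * (M : ℝ) - 1) * ((1 + t) ^ E) := mul_le_mul_of_nonneg_left hPi h2M1
  -- final contradiction
  have hM0 : (0 : ℝ) < M := by exact_mod_cast hMpos
  have hcond' : (2 - y ^ (-b)) * ((1 + t) ^ E) ≤ 2 := hcond
  nlinarith [mul_le_mul_of_nonneg_left hcond' hM0.le,
    mul_lt_mul_of_pos_right htM hC0]
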